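/- arXiv:0705.1853 — 3 statements merged into one kernel-verified Lean document; each statement's English description precedes it below -/
import Mathlib

section
/- Let a > 0 and let j : ℝ → ℝ be twice continuously differentiable on [0, ∞). Suppose that j(t) ≥ 0 for all t ≥ 0, that j''(t) ≥ a² · j(t) for all t ≥ 0, and that j(t) → 0 as t → ∞. Then j(t) ≤ j(0) · exp(−a·t) for all t ≥ 0. -/
/-- Rauch's comparison lemma (Lemma 5.1): a nonnegative function on `[0, ∞)` that is
twice continuously differentiable, satisfies the differential inequality `j'' ≥ a² j`,
and tends to `0` at infinity, is dominated by `j 0 · exp (−a t)`. -/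
theorem stmt_0 (a : ℝ) (ha : 0 < a) (j : ℝ → ℝ)
    (hj : ContDiffOn ℝ 2 j (Set.Ici 0))
    (hpos : ∀ t, 0 ≤ t → 0 ≤ j t)
    (hineq : ∀ t, 0 ≤ t → a ^ 2 * j t ≤ deriv (deriv j) t)
    (hlim : Filter.Tendsto j Filter.atTop (nhds 0)) :
    ∀ t, 0 ≤ t → j t ≤ j 0 * Real.exp (-a * t) := by
  have hj1 : ContDiffOn ℝ 1 (deriv j) (Set.Ioi 0) := by
    exact (hj.mono Set.Ioi_subset_Ici_self).deriv_of_isOpen (m := 1) isOpen_Ioi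
      (by norm_num)
  have hdj : ∀ t : ℝ, 0 < t → HasDerivAt j (deriv j t) t := by
    intro t ht
    exact ((hj.differentiableOn (by norm_num)).differentiableAt
      (Ici_mem_nhds ht)).hasDerivAt
  have hddj : ∀ t : ℝ, 0 < t → HasDerivAt (deriv j) (deriv (deriv j) t) t := by
    intro t ht
    exact ((hj1.differentiableOn (by norm_num)).differentiableAt
      (isOpen_Ioi.mem_nhds ht)).hasDerivAt
  have hcontj : ContinuousOn j (Set.Ici 0) := hj.continuousOn
  have hconth : ContinuousOn (fun t => deriv j t + a * j t) (Set.Ioi 0) :=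
    hj1.continuousOn.add
      (continuousOn_const.mul (hcontj.mono Set.Ioi_subset_Ici_self))
  -- Key step: j' + a j ≤ 0 on (0, ∞)
  have hkey : ∀ t : ℝ, 0 < t → deriv j t + a * j t ≤ 0 := by
    intro t0 ht0
    by_contra hc
    push_neg at hc
    set c := deriv j t0 + a * j t0 with hcdef
    -- G(t) = exp(-a t) (j' + a j) is monotone on [t0, ∞)
    have hG : MonotoneOn (fun t => Real.exp (-a * t) * (deriv j t + a * j t))
        (Set.Ici t0) := by
      have hss : Set.Ici t0 ⊆ Set.Ioi (0 : ℝ) := Set.Ici_subset_Ioi.mpr ht0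
      apply monotoneOn_of_deriv_nonneg (convex_Ici t0)
      · exact ((Real.continuous_exp.comp
          (continuous_const.mul continuous_id)).continuousOn).mul
          (hconth.mono hss)
      · rw [interior_Ici]
        intro x hx
        have hx0 : (0 : ℝ) < x := ht0.trans hx
        have he : HasDerivAt (fun t => Real.exp (-a * t))
            (Real.exp (-a * x) * (-a * 1)) x :=
          ((hasDerivAt_id x).const_mul (-a)).exp
        have hh : HasDerivAt (fun t => deriv j t + a * j t)
            (deriv (deriv j) x + a * deriv j x) x :=
          (hddj x hx0).add ((hdj x hx0).const_mul a)
        exact (he.mul hh).differentiableAt.differentiableWithinAt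
      · rw [interior_Ici]
        intro x hx
        have hx0 : (0 : ℝ) < x := ht0.trans hx
        have he : HasDerivAt (fun t => Real.exp (-a * t))
            (Real.exp (-a * x) * (-a * 1)) x :=
          ((hasDerivAt_id x).const_mul (-a)).exp
        have hh : HasDerivAt (fun t => deriv j t + a * j t)
            (deriv (deriv j) x + a * deriv j x) x :=
          (hddj x hx0).add ((hdj x hx0).const_mul a)
        erw [(he.mul hh).deriv]
        have h1 := hineq x hx0.le
        nlinarith [mul_nonneg (Real.exp_pos (-a * x)).le
          (sub_nonneg.mpr (hineq x hx0.le))]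
    -- hence j' + a j ≥ c on [t0, ∞)
    have hlb : ∀ t : ℝ, t0 ≤ t → c ≤ deriv j t + a * j t := by
      intro t htt
      have h2 : Real.exp (-a * t0) * (deriv j t0 + a * j t0) ≤
          Real.exp (-a * t) * (deriv j t + a * j t) :=
        hG (Set.self_mem_Ici) (Set.mem_Ici.mpr htt) htt
      have h1 : Real.exp (-a * t) ≤ Real.exp (-a * t0) :=
        Real.exp_le_exp.mpr (by nlinarith)
      by_contra hcc
      push_neg at hcc
      have h3 : Real.exp (-a * t) * (deriv j t + a * j t) <
          Real.exp (-a * t) * c := by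
        exact (mul_lt_mul_iff_right₀ (Real.exp_pos _)).mpr hcc
      have h4 : Real.exp (-a * t) * c ≤ Real.exp (-a * t0) * c :=
        mul_le_mul_of_nonneg_right h1 hc.le
      rw [hcdef] at h3 h4
      linarith
    -- j is eventually small
    have hc2a : (0 : ℝ) < c / (2 * a) := div_pos hc (by linarith)
    have hev : ∀ᶠ t in Filter.atTop, j t < c / (2 * a) :=
      hlim.eventually (gt_mem_nhds hc2a)
    obtain ⟨T, hT⟩ := Filter.eventually_atTop.mp hev
    set T' := max T t0 with hT'def
    have hT'0 : (0 : ℝ) < T' := lt_of_lt_of_le ht0 (le_max_right T t0)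
    -- hence j' ≥ c/2 eventually
    have hderiv_lb : ∀ t : ℝ, T' ≤ t → c / 2 ≤ deriv j t := by
      intro t htt
      have h1 := hlb t (le_trans (le_max_right T t0) htt)
      have h2 := hT t (le_trans (le_max_left T t0) htt)
      have h3 : a * j t < a * (c / (2 * a)) := (mul_lt_mul_iff_right₀ ha).mpr h2
      have h4 : a * (c / (2 * a)) = c / 2 := by
        field_simp
      linarith
    -- so j grows at least linearly, contradiction with j → 0
    have hmono : MonotoneOn (fun t => j t - c / 2 * t) (Set.Ici T') := by
      apply monotoneOn_of_deriv_nonneg (convex_Ici T')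
      · exact (hcontj.mono (Set.Ici_subset_Ici.mpr hT'0.le)).sub
          ((continuous_const.mul continuous_id).continuousOn)
      · rw [interior_Ici]
        intro x hx
        have hx0 : (0 : ℝ) < x := hT'0.trans hx
        have hlin : HasDerivAt (fun t : ℝ => c / 2 * t) (c / 2) x := by
          simpa using (hasDerivAt_id x).const_mul (c / 2)
        exact ((hdj x hx0).sub hlin).differentiableAt.differentiableWithinAt
      · rw [interior_Ici]
        intro x hx
        have hx0 : (0 : ℝ) < x := hT'0.trans hx
        have hlin : HasDerivAt (fun t : ℝ => c / 2 * t) (c / 2) x := by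
          simpa using (hasDerivAt_id x).const_mul (c / 2)
        erw [((hdj x hx0).sub hlin).deriv]
        have := hderiv_lb x (le_of_lt hx)
        linarith
    have hjtop : Filter.Tendsto j Filter.atTop Filter.atTop := by
      apply Filter.tendsto_atTop_mono' Filter.atTop
        (f₁ := fun t => (j T' - c / 2 * T') + c / 2 * t)
      · filter_upwards [Filter.eventually_ge_atTop T'] with t htt
        have := hmono (Set.self_mem_Ici) (Set.mem_Ici.mpr htt) htt
        simp only at this
        linarith
      · exact Filter.tendsto_atTop_add_const_left _ _
          (Filter.Tendsto.const_mul_atTop (by linarith) Filter.tendsto_id)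
    exact absurd hlim (not_tendsto_nhds_of_tendsto_atTop hjtop 0)
  -- now e^{a t} j(t) is antitone on [0, ∞)
  have hF : AntitoneOn (fun t => Real.exp (a * t) * j t) (Set.Ici 0) := by
    apply antitoneOn_of_deriv_nonpos (convex_Ici 0)
    · exact ((Real.continuous_exp.comp
        (continuous_const.mul continuous_id)).continuousOn).mul hcontj
    · rw [interior_Ici]
      intro x hx
      have he : HasDerivAt (fun t => Real.exp (a * t))
          (Real.exp (a * x) * (a * 1)) x :=
        ((hasDerivAt_id x).const_mul a).exp
      exact (he.mul (hdj x hx)).differentiableAt.differentiableWithinAt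
    · rw [interior_Ici]
      intro x hx
      have he : HasDerivAt (fun t => Real.exp (a * t))
          (Real.exp (a * x) * (a * 1)) x :=
        ((hasDerivAt_id x).const_mul a).exp
      erw [(he.mul (hdj x hx)).deriv]
      have h1 := hkey x hx
      nlinarith [mul_nonpos_of_nonneg_of_nonpos (Real.exp_pos (a * x)).le h1]
  intro t ht
  have h1 : Real.exp (a * t) * j t ≤ j 0 := by
    have := hF (Set.self_mem_Ici) (Set.mem_Ici.mpr ht) ht
    simpa using this
  have h2 : Real.exp (-a * t) * Real.exp (a * t) = 1 := by
    rw [← Real.exp_add]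
    norm_num
  have h3 := mul_le_mul_of_nonneg_left h1 (Real.exp_pos (-a * t)).le
  calc j t = Real.exp (-a * t) * Real.exp (a * t) * j t := by rw [h2]; ring
    _ = Real.exp (-a * t) * (Real.exp (a * t) * j t) := by ring
    _ ≤ Real.exp (-a * t) * j 0 := h3
    _ = j 0 * Real.exp (-a * t) := mul_comm _ _
end

section
/- Let a > 0 and R > 0. Let j, g : ℝ → ℝ be continuous on [0, R] and twice continuously differentiable on (0, R), and suppose that a²·j(t) − j''(t) ≤ 0 for all t ∈ (0, R), that a²·g(t) − g''(t) = 0 for all t ∈ (0, R), and that j(0) ≤ g(0) and j(R) ≤ g(R). Then j(t) ≤ g(t) for all t ∈ [0, R]. -/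
/-- Maximum-principle step: a subsolution `j` of `u ↦ a²·u − u''` lying below an exact
solution `g` at the endpoints of `[0, R]` lies below it on all of `[0, R]`. -/
theorem stmt_1 (a R : ℝ) (ha : 0 < a) (hR : 0 < R) (j g : ℝ → ℝ)
    (hjc : ContinuousOn j (Set.Icc 0 R))
    (hgc : ContinuousOn g (Set.Icc 0 R))
    (hjd : ContDiffOn ℝ 2 j (Set.Ioo 0 R))
    (hgd : ContDiffOn ℝ 2 g (Set.Ioo 0 R))
    (hjineq : ∀ t ∈ Set.Ioo 0 R, a ^ 2 * j t - deriv (deriv j) t ≤ 0)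
    (hgeq : ∀ t ∈ Set.Ioo 0 R, a ^ 2 * g t - deriv (deriv g) t = 0)
    (h0 : j 0 ≤ g 0) (hRend : j R ≤ g R) :
    ∀ t ∈ Set.Icc 0 R, j t ≤ g t := by
  set u : ℝ → ℝ := fun t => j t - g t with hu_def
  have huc : ContinuousOn u (Set.Icc 0 R) := hjc.sub hgc
  have hud : ContDiffOn ℝ 2 u (Set.Ioo 0 R) := hjd.sub hgd
  have hopen : IsOpen (Set.Ioo (0:ℝ) R) := isOpen_Ioo
  -- existence of a max point
  obtain ⟨c, hcmem, hcmax⟩ :=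
    isCompact_Icc.exists_isMaxOn (Set.nonempty_Icc.2 hR.le) huc
  intro t ht
  by_contra hcontra
  push_neg at hcontra
  have hucpos : 0 < u c := lt_of_lt_of_le (sub_pos.2 hcontra) (hcmax ht)
  -- c is interior
  have hc0 : c ≠ 0 := by
    rintro rfl
    simp only [hu_def] at hucpos; linarith
  have hcR : c ≠ R := by
    rintro rfl
    simp only [hu_def] at hucpos; linarith
  have hcIoo : c ∈ Set.Ioo 0 R :=
    ⟨lt_of_le_of_ne hcmem.1 (Ne.symm hc0), lt_of_le_of_ne hcmem.2 hcR⟩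
  -- differentiability facts
  have hjderiv : ContDiffOn ℝ 1 (deriv j) (Set.Ioo 0 R) :=
    hjd.deriv_of_isOpen hopen (by norm_num)
  have hgderiv : ContDiffOn ℝ 1 (deriv g) (Set.Ioo 0 R) :=
    hgd.deriv_of_isOpen hopen (by norm_num)
  have huderiv : ContDiffOn ℝ 1 (deriv u) (Set.Ioo 0 R) :=
    hud.deriv_of_isOpen hopen (by norm_num)
  have hjdiff : ∀ x ∈ Set.Ioo (0:ℝ) R, DifferentiableAt ℝ j x := fun x hx =>
    (hjd.differentiableOn (by norm_num)).differentiableAt (hopen.mem_nhds hx)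
  have hgdiff : ∀ x ∈ Set.Ioo (0:ℝ) R, DifferentiableAt ℝ g x := fun x hx =>
    (hgd.differentiableOn (by norm_num)).differentiableAt (hopen.mem_nhds hx)
  have hudiff : ∀ x ∈ Set.Ioo (0:ℝ) R, DifferentiableAt ℝ u x := fun x hx =>
    (hjdiff x hx).sub (hgdiff x hx)
  -- deriv u = deriv j - deriv g on Ioo
  have hderiv_eq : ∀ x ∈ Set.Ioo (0:ℝ) R, deriv u x = deriv j x - deriv g x := fun x hx =>
    deriv_sub (hjdiff x hx) (hgdiff x hx)
  -- second derivative at c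
  have hujdiff2 : DifferentiableAt ℝ (deriv j) c :=
    (hjderiv.differentiableOn (by norm_num)).differentiableAt (hopen.mem_nhds hcIoo)
  have hugdiff2 : DifferentiableAt ℝ (deriv g) c :=
    (hgderiv.differentiableOn (by norm_num)).differentiableAt (hopen.mem_nhds hcIoo)
  have hueq : deriv u =ᶠ[nhds c] fun x => deriv j x - deriv g x := by
    filter_upwards [hopen.mem_nhds hcIoo] with x hx using hderiv_eq x hx
  have hdd : deriv (deriv u) c = deriv (deriv j) c - deriv (deriv g) c := by
    rw [hueq.deriv_eq, deriv_fun_sub hujdiff2 hugdiff2]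
  -- a² u c ≤ u'' c, so u'' c > 0
  have hkey : a ^ 2 * u c ≤ deriv (deriv u) c := by
    have h1 := hjineq c hcIoo
    have h2 := hgeq c hcIoo
    rw [hdd]; simp only [hu_def]; nlinarith
  have hddpos : 0 < deriv (deriv u) c := by
    have : 0 < a ^ 2 * u c := by positivity
    linarith
  -- c is a local max, so deriv u c = 0
  have hlocmax : IsLocalMax u c := by
    have : Set.Icc 0 R ∈ nhds c :=
      mem_nhds_iff.2 ⟨Set.Ioo 0 R, Set.Ioo_subset_Icc_self, hopen, hcIoo⟩
    filter_upwards [this] with x hx using hcmax hx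
  have hduc : deriv u c = 0 := hlocmax.deriv_eq_zero
  -- deriv u has positive derivative at c, hence deriv u > 0 just right of c
  have hudd2 : DifferentiableAt ℝ (deriv u) c :=
    (huderiv.differentiableOn (by norm_num)).differentiableAt (hopen.mem_nhds hcIoo)
  have hslope : Filter.Tendsto (slope (deriv u) c) (nhdsWithin c {c}ᶜ)
      (nhds (deriv (deriv u) c)) :=
    hasDerivAt_iff_tendsto_slope.1 hudd2.hasDerivAt
  have hpos_right : ∀ᶠ x in nhdsWithin c (Set.Ioi c), 0 < deriv u x := by
    have h1 : Filter.Tendsto (slope (deriv u) c) (nhdsWithin c (Set.Ioi c))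
        (nhds (deriv (deriv u) c)) :=
      hslope.mono_left (nhdsWithin_mono c fun x hx => ne_of_gt hx)
    have h2 : ∀ᶠ x in nhdsWithin c (Set.Ioi c), 0 < slope (deriv u) c x :=
      h1.eventually (eventually_gt_nhds hddpos)
    filter_upwards [h2, self_mem_nhdsWithin] with x hx hx'
    have hxc : 0 < x - c := sub_pos.2 hx'
    have : slope (deriv u) c x = (deriv u x - deriv u c) / (x - c) := by
      rw [slope_def_field]
    rw [this, hduc, sub_zero] at hx
    exact (div_pos_iff.1 hx).resolve_right (fun h => absurd hxc (by linarith [h.2])) |>.1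
  -- extract an interval (c, d) where deriv u > 0
  obtain ⟨d, hdc, hd⟩ := (mem_nhdsGT_iff_exists_Ioo_subset).1 hpos_right
  -- u is strictly increasing on [c, min d R], contradiction with max
  set d' : ℝ := min d R with hd'_def
  have hcd' : c < d' := lt_min hdc hcIoo.2
  have hsub : Set.Icc c d' ⊆ Set.Icc 0 R := fun x hx =>
    ⟨le_trans hcIoo.1.le hx.1, le_trans hx.2 (min_le_right _ _)⟩
  have hmono : StrictMonoOn u (Set.Icc c d') := by
    apply strictMonoOn_of_deriv_pos (convex_Icc c d') (huc.mono hsub)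
    intro x hx
    rw [interior_Icc] at hx
    exact hd ⟨hx.1, lt_of_lt_of_le hx.2 (min_le_left _ _)⟩
  have hlt : u c < u d' :=
    hmono (Set.left_mem_Icc.2 hcd'.le) (Set.right_mem_Icc.2 hcd'.le) hcd'
  have : u d' ≤ u c := hcmax (hsub (Set.right_mem_Icc.2 hcd'.le))
  linarith
end

section
/- Let a > 0, let j : ℝ → ℝ be twice continuously differentiable on [0, ∞) with j(0) > 0, and let c : ℝ → ℝ be continuous on [0, ∞) with c(t) ≥ 0 for all t ≥ 0. Suppose that j''(t) = j(t) · (c(t) + a²) for all t ≥ 0, that j(t) ≥ j(0) · exp(−a·t) for all t ≥ 0, and that j(t) → 0 as t → ∞. Then j(t) = j(0) · exp(−a·t) for all t ≥ 0, and c(t) = 0 for all t ≥ 0. -/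
open Set Filter Real


/-- Analytic core of Section 5: if `j'' = j·(c + a²)` with `c ≥ 0`, `j(t) ≥ j(0)e^{−at}`,
and `j → 0` at infinity, then `j(t) = j(0)e^{−at}` and `c ≡ 0` on `[0, ∞)`. -/
theorem stmt_4 (a : ℝ) (ha : 0 < a) (j c : ℝ → ℝ)
    (hj : ContDiffOn ℝ 2 j (Set.Ici 0))
    (hj0 : 0 < j 0)
    (hc : ContinuousOn c (Set.Ici 0))
    (hcpos : ∀ t, 0 ≤ t → 0 ≤ c t)
    (heq : ∀ t, 0 ≤ t → deriv (deriv j) t = j t * (c t + a ^ 2))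
    (hlower : ∀ t, 0 ≤ t → j 0 * Real.exp (-a * t) ≤ j t)
    (hlim : Filter.Tendsto j Filter.atTop (nhds 0)) :
    (∀ t, 0 ≤ t → j t = j 0 * Real.exp (-a * t)) ∧ (∀ t, 0 ≤ t → c t = 0) := by
  set E : ℝ → ℝ := fun s => j 0 * Real.exp (-a * s) with hEdef
  have hEpos : ∀ t : ℝ, 0 < E t := fun t => mul_pos hj0 (Real.exp_pos _)
  have hE : ∀ t : ℝ, HasDerivAt E (-a * E t) t := by
    intro t
    have h1 : HasDerivAt (fun s : ℝ => -a * s) (-a) t := by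
      simpa using (hasDerivAt_id t).const_mul (-a)
    have := (h1.exp).const_mul (j 0)
    rw [show -a * E t = j 0 * (Real.exp (-a * t) * -a) by simp [hEdef]; ring]
    exact this
  have hE2 : ∀ t : ℝ, HasDerivAt (fun s => -a * E s) (a ^ 2 * E t) t := by
    intro t
    have := (hE t).const_mul (-a)
    rw [show a ^ 2 * E t = -a * (-a * E t) by ring]; exact this
  have hderivE : deriv E = fun t => -a * E t := funext fun t => (hE t).deriv
  -- differentiability of j on Ioi 0
  have hjIoi : ContDiffOn ℝ 2 j (Set.Ioi 0) := hj.mono Set.Ioi_subset_Ici_self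
  have hjIoi' : ContDiffOn ℝ (1 + 1) j (Set.Ioi 0) := by
    norm_num
    exact hjIoi
  have hsplit := (contDiffOn_succ_iff_deriv_of_isOpen (n := 1) isOpen_Ioi).1 hjIoi'
  have hjdiff : DifferentiableOn ℝ j (Set.Ioi 0) := hsplit.1
  have hj'diff : DifferentiableOn ℝ (deriv j) (Set.Ioi 0) :=
    hsplit.2.2.differentiableOn one_ne_zero
  have hjAt : ∀ t : ℝ, 0 < t → DifferentiableAt ℝ j t := fun t ht =>
    (hjdiff.differentiableAt (isOpen_Ioi.mem_nhds ht))
  have hj'At : ∀ t : ℝ, 0 < t → DifferentiableAt ℝ (deriv j) t := fun t ht =>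
    (hj'diff.differentiableAt (isOpen_Ioi.mem_nhds ht))
  set g : ℝ → ℝ := fun s => j s - E s with hgdef
  have hg0 : g 0 = 0 := by simp [hgdef, hEdef]
  have hgnonneg : ∀ t, 0 ≤ t → 0 ≤ g t := fun t ht => sub_nonneg.2 (hlower t ht)
  have hgcont : ContinuousOn g (Set.Ici 0) :=
    hj.continuousOn.sub ((continuous_const.mul ((continuous_const.mul continuous_id).rexp)).continuousOn)
  have hgdiff : DifferentiableOn ℝ g (Set.Ioi 0) :=
    hjdiff.sub fun t _ => ((hE t).differentiableAt).differentiableWithinAt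
  -- deriv g = deriv j - (-a * E) on Ioi 0
  have hderivg : ∀ t : ℝ, 0 < t → deriv g t = deriv j t - (-a * E t) := by
    intro t ht
    rw [hgdef, deriv_fun_sub (hjAt t ht) (hE t).differentiableAt, (hE t).deriv]
  have hg'diff : DifferentiableOn ℝ (deriv g) (Set.Ioi 0) := by
    have : DifferentiableOn ℝ (fun t => deriv j t - (-a * E t)) (Set.Ioi 0) :=
      hj'diff.sub fun t _ => ((hE2 t).differentiableAt).differentiableWithinAt
    exact this.congr fun t ht => hderivg t ht
  have hderiv2g : ∀ t : ℝ, 0 < t →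
      deriv (deriv g) t = deriv (deriv j) t - a ^ 2 * E t := by
    intro t ht
    have hev : deriv g =ᶠ[nhds t] fun s => deriv j s - (-a * E s) :=
      Filter.eventuallyEq_of_mem (isOpen_Ioi.mem_nhds ht) fun s hs => hderivg s hs
    rw [hev.deriv_eq, deriv_fun_sub (hj'At t ht) (hE2 t).differentiableAt, (hE2 t).deriv]
  have hconv : ConvexOn ℝ (Set.Ici 0) g := by
    apply convexOn_of_deriv2_nonneg (convex_Ici 0) hgcont
    · rwa [interior_Ici]
    · rwa [interior_Ici]
    · intro t ht
      rw [interior_Ici] at ht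
      have ht' : (0:ℝ) ≤ t := le_of_lt ht
      have hd := hderiv2g t ht
      show 0 ≤ deriv (deriv g) t
      rw [hd, heq t ht']
      have h4 : E t = j 0 * Real.exp (-a * t) := rfl
      have h1 : E t ≤ j t := by rw [h4]; exact hlower t ht'
      have h2 := hcpos t ht'
      have h3 := hEpos t
      nlinarith [mul_nonneg (h3.le.trans h1) h2, mul_le_mul_of_nonneg_right h1 (sq_nonneg a)]
  -- E tends to 0 at infinity
  have hEtend : Filter.Tendsto E Filter.atTop (nhds 0) := by
    have h1 : Filter.Tendsto (fun t : ℝ => -a * t) Filter.atTop Filter.atBot :=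
      Filter.tendsto_id.const_mul_atTop_of_neg (neg_lt_zero.2 ha)
    have h2 := (Real.tendsto_exp_atBot.comp h1).const_mul (j 0)
    simpa [hEdef, neg_mul] using h2
  have hgtend : Filter.Tendsto g Filter.atTop (nhds 0) := by
    simpa using hlim.sub hEtend
  -- g vanishes on Ici 0
  have hgzero : ∀ t, 0 ≤ t → g t = 0 := by
    intro t ht
    by_contra hne
    have hgt : 0 < g t := lt_of_le_of_ne (hgnonneg t ht) (Ne.symm hne)
    have htpos : 0 < t := by
      rcases eq_or_lt_of_le ht with h | h
      · exfalso; rw [← h, hg0] at hgt; exact lt_irrefl 0 hgt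
      · exact h
    have key : ∀ s, t ≤ s → g t ≤ g s := by
      intro s hs
      have hspos : 0 < s := lt_of_lt_of_le htpos hs
      have hμ : 0 ≤ 1 - t / s := by
        have : t / s ≤ 1 := (div_le_one hspos).2 hs
        linarith
      have hν : 0 ≤ t / s := div_nonneg htpos.le hspos.le
      have hsum : (1 - t / s) + t / s = 1 := by ring
      have := hconv.2 (Set.self_mem_Ici) (Set.mem_Ici.2 hspos.le) hμ hν hsum
      have hx : (1 - t / s) • (0:ℝ) + (t / s) • s = t := by
        field_simp
        rw [smul_zero, zero_add, smul_eq_mul, div_mul_cancel₀ t hspos.ne']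
      rw [hx, hg0] at this
      have h1 : g t ≤ (t / s) * g s := by simpa using this
      have h2 : (t / s) * g s ≤ g s := by
        have hgs : 0 ≤ g s := hgnonneg s (le_trans ht hs)
        nlinarith [mul_nonneg hμ hgs]
      exact h1.trans h2
    have hev : ∀ᶠ s in Filter.atTop, g s < g t :=
      hgtend.eventually_lt_const hgt
    rcases (hev.and (Filter.eventually_ge_atTop t)).exists with ⟨s, hs1, hs2⟩
    exact absurd (key s hs2) (not_le.2 hs1)
  have hjE : ∀ t, 0 ≤ t → j t = E t := fun t ht => sub_eq_zero.1 (hgzero t ht)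
  constructor
  · exact hjE
  · -- c vanishes
    have hcIoi : ∀ t : ℝ, 0 < t → c t = 0 := by
      intro t ht
      have hev : j =ᶠ[nhds t] E :=
        Filter.eventuallyEq_of_mem (isOpen_Ioi.mem_nhds ht) fun s hs => hjE s (le_of_lt hs)
      have h1 : deriv (deriv j) t = deriv (deriv E) t := hev.deriv.deriv_eq
      have h2 : deriv (deriv E) t = a ^ 2 * E t := by
        rw [hderivE]; exact (hE2 t).deriv
      have h3 := heq t ht.le
      rw [h1, h2, hjE t ht.le] at h3
      have hEt := hEpos t
      have : c t + a ^ 2 = a ^ 2 := by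
        have := mul_left_cancel₀ hEt.ne' (by linarith [h3] : E t * (c t + a ^ 2) = E t * a ^ 2)
        linarith [this]
      linarith
    intro t ht
    rcases eq_or_lt_of_le ht with h | h
    · -- t = 0 : use continuity from the right
      subst h
      have h1 : Filter.Tendsto c (nhdsWithin 0 (Set.Ioi 0)) (nhds (c 0)) :=
        (hc 0 Set.self_mem_Ici).mono_left (nhdsWithin_mono 0 Set.Ioi_subset_Ici_self)
      have h2 : Filter.Tendsto c (nhdsWithin 0 (Set.Ioi 0)) (nhds 0) := by
        apply Filter.Tendsto.congr' _ tendsto_const_nhds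
        filter_upwards [self_mem_nhdsWithin] with s hs
        exact (hcIoi s hs).symm
      exact tendsto_nhds_unique h1 h2
    · exact hcIoi t h
end
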